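/- For every positive integer j, the sum of A(i) for i from 1 to j is at most (j/2)·(3 + ⌊log₂ j⌋). -/
import Mathlib


/-- A006519: largest power of 2 dividing `j`. -/
def A (j : ℕ) : ℕ := 2 ^ (j.factorization 2)

lemma A_two_mul (m : ℕ) (hm : m ≠ 0) : A (2 * m) = 2 * A m := by
  unfold A
  rw [Nat.factorization_mul two_ne_zero hm]
  simp [Nat.Prime.factorization_self Nat.prime_two, pow_add]

lemma even_filter_eq (j : ℕ) :
    (Finset.Icc 1 j).filter (fun i => 2 ∣ i) =
      (Finset.Icc 1 (j / 2)).image (fun m => 2 * m) := by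
  ext i
  simp only [Finset.mem_filter, Finset.mem_Icc, Finset.mem_image]
  constructor
  · rintro ⟨⟨h1, h2⟩, k, rfl⟩
    exact ⟨k, by omega, rfl⟩
  · rintro ⟨k, ⟨h1, h2⟩, rfl⟩
    exact ⟨by omega, ⟨k, rfl⟩⟩

lemma S_rec (j : ℕ) :
    ∑ i ∈ Finset.Icc 1 j, A i =
      (j + 1) / 2 + 2 * ∑ i ∈ Finset.Icc 1 (j / 2), A i := by
  rw [← Finset.sum_filter_add_sum_filter_not (Finset.Icc 1 j) (fun i => 2 ∣ i)]
  have heven : ∑ i ∈ (Finset.Icc 1 j).filter (fun i => 2 ∣ i), A i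
      = 2 * ∑ i ∈ Finset.Icc 1 (j / 2), A i := by
    rw [even_filter_eq, Finset.sum_image (fun a _ b _ h => mul_left_cancel₀ two_ne_zero h)]
    rw [Finset.mul_sum]
    refine Finset.sum_congr rfl fun m hm => ?_
    simp only [Finset.mem_Icc] at hm
    exact A_two_mul m (by omega)
  have hodd : ∑ i ∈ (Finset.Icc 1 j).filter (fun i => ¬ 2 ∣ i), A i
      = (j + 1) / 2 := by
    have h1 : ∀ i ∈ (Finset.Icc 1 j).filter (fun i => ¬ 2 ∣ i), A i = 1 := by
      intro i hi
      simp only [Finset.mem_filter] at hi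
      unfold A
      rw [Nat.factorization_eq_zero_of_not_dvd hi.2]
      simp
    rw [Finset.sum_congr rfl h1, Finset.sum_const, smul_eq_mul, mul_one]
    have hc : ((Finset.Icc 1 j).filter (fun i => 2 ∣ i)).card = j / 2 := by
      rw [even_filter_eq, Finset.card_image_of_injective _ (mul_right_injective₀ two_ne_zero)]
      simp
    have := Finset.card_filter_add_card_filter_not
      (s := Finset.Icc 1 j) (p := fun i => 2 ∣ i)
    simp only [Nat.card_Icc] at this
    omega
  omega

lemma S_bound (j : ℕ) :
    2 * ∑ i ∈ Finset.Icc 1 j, A i ≤ j * (3 + Nat.log 2 j) := by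
  induction j using Nat.strong_induction_on with
  | _ j ih =>
    rcases Nat.lt_or_ge j 2 with hj | hj
    · interval_cases j <;> simp [A]
    · have hrec := S_rec j
      have hhalf : j / 2 < j := by omega
      have IH := ih (j / 2) hhalf
      have hL : Nat.log 2 (j / 2) = Nat.log 2 j - 1 := Nat.log_div_base 2 j
      have hL1 : 1 ≤ Nat.log 2 j := Nat.le_log_of_pow_le one_lt_two (by omega)
      set L := Nat.log 2 j with hLdef
      rw [hL] at IH
      have he : 2 * (j / 2) ≤ j := by omega
      have hsum : (j + 1) / 2 + j / 2 = j := by omega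
      -- combine
      have h3 : 3 + (L - 1) = 2 + L := by omega
      rw [h3] at IH
      rw [hrec]
      nlinarith [IH, he, hsum]

theorem stmt_2 (j : ℕ) (hj : 0 < j) :
    (∑ i ∈ Finset.Icc 1 j, (A i : ℝ)) ≤ (j / 2) * (3 + Nat.log 2 j) := by
  have h := S_bound j
  have h' : ((2 * ∑ i ∈ Finset.Icc 1 j, A i : ℕ) : ℝ) ≤ ((j * (3 + Nat.log 2 j) : ℕ) : ℝ) := by
    exact_mod_cast h
  push_cast at h' ⊢
  linarith
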